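/- Let p, q be coprime positive integers with |α − p/q| < 1/q². Then any interval on the circle of length 1/q contains at most two elements of the set { {x + kα} : k = 0, …, q−1 }, for any x. -/

import Mathlib

lemma key_pm (α : ℝ) (p q : ℕ) (hq : 0 < q) (hcop : Nat.Coprime p q)
    (happrox : |α - (p : ℝ) / (q : ℝ)| < 1 / (q : ℝ)^2) (d m : ℤ)
    (hd : 0 < d) (hdq : d < q) (hδ : |(d : ℝ) * α - (m : ℝ)| < 1 / (q : ℝ)) :
    d * (p : ℤ) - m * (q : ℤ) = 1 ∨ d * (p : ℤ) - m * (q : ℤ) = -1 := by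
  set n : ℤ := d * (p : ℤ) - m * (q : ℤ) with hn
  have hq' : (0 : ℝ) < q := by exact_mod_cast hq
  have hd' : (1 : ℝ) ≤ (d : ℝ) := by exact_mod_cast hd
  have hdq' : (d : ℝ) ≤ (q : ℝ) - 1 := by
    have : d ≤ (q : ℤ) - 1 := by omega
    exact_mod_cast this
  have habs : |(n : ℝ)| < 2 := by
    have heq : (n : ℝ) = (-(d : ℝ) * (α - (p : ℝ) / q) + ((d : ℝ) * α - m)) * q := by
      push_cast [hn]; field_simp; ring
    rw [heq, abs_mul, abs_of_pos hq']
    have h2 : |(-(d : ℝ) * (α - (p : ℝ) / q) + ((d : ℝ) * α - m))|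
        ≤ (d : ℝ) * |α - (p : ℝ) / q| + |(d : ℝ) * α - m| := by
      calc |(-(d : ℝ) * (α - (p : ℝ) / q) + ((d : ℝ) * α - m))|
          ≤ |(-(d : ℝ) * (α - (p : ℝ) / q))| + |(d : ℝ) * α - m| := abs_add_le _ _
        _ = (d : ℝ) * |α - (p : ℝ) / q| + |(d : ℝ) * α - m| := by
            rw [abs_mul, abs_neg, abs_of_pos (by linarith)]
    have hε : (0 : ℝ) ≤ |α - (p : ℝ) / q| := abs_nonneg _
    have h3 : (d : ℝ) * |α - (p : ℝ) / q| + |(d : ℝ) * α - m| < 2 / q := by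
      have : (d : ℝ) * |α - (p : ℝ) / q| ≤ ((q : ℝ) - 1) * (1 / q ^ 2) := by
        nlinarith
      have hq2 : ((q : ℝ) - 1) * (1 / q ^ 2) + 1 / q < 2 / q := by
        rw [show ((q : ℝ) - 1) * (1 / q ^ 2) + 1 / q = (2 * q - 1) / q ^ 2 by field_simp; ring,
          show (2 : ℝ) / q = 2 * q / q ^ 2 by field_simp,
          div_lt_div_iff₀ (by positivity) (by positivity)]
        nlinarith
      linarith
    calc |(-(d : ℝ) * (α - (p : ℝ) / q) + ((d : ℝ) * α - m))| * q
        ≤ ((d : ℝ) * |α - (p : ℝ) / q| + |(d : ℝ) * α - m|) * q := by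
          apply mul_le_mul_of_nonneg_right h2 hq'.le
      _ < (2 / q) * q := by apply mul_lt_mul_of_pos_right h3 hq'
      _ = 2 := by field_simp
  have hne : n ≠ 0 := by
    intro h0
    have hdvd : (q : ℤ) ∣ d * p := ⟨m, by linear_combination h0⟩
    have hcop' : IsCoprime (q : ℤ) (p : ℤ) :=
      Int.isCoprime_iff_gcd_eq_one.mpr (by simpa [Nat.gcd_comm] using hcop)
    have : (q : ℤ) ∣ d := hcop'.dvd_of_dvd_mul_right hdvd
    have := Int.le_of_dvd hd this
    omega
  have hlt : |n| < 2 := by exact_mod_cast (by rwa [← Int.cast_abs] at habs : ((|n| : ℤ) : ℝ) < 2)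
  clear_value n
  have := abs_lt.mp hlt
  omega

theorem stmt5 (α : ℝ) (p q : ℕ) (hp : 0 < p) (hq : 0 < q) (hcop : Nat.Coprime p q)
    (happrox : |α - (p : ℝ) / (q : ℝ)| < 1 / (q : ℝ)^2) (x : ℝ) :
    -- any interval (arc) of length 1/q on the circle contains at most two of the points
    -- {x + kα}, k = 0, …, q−1
    ∀ t : ℝ,
      Set.ncard {k : ℕ | k < q ∧ ∃ m : ℤ, x + (k : ℝ) * α - (m : ℝ) ∈ Set.Ico t (t + 1 / (q : ℝ))}
        ≤ 2 := by
  intro t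
  set S := {k : ℕ | k < q ∧ ∃ m : ℤ, x + (k : ℝ) * α - (m : ℝ) ∈ Set.Ico t (t + 1 / (q : ℝ))}
    with hS
  have hfin : S.Finite := Set.Finite.subset (Set.finite_Iio q) (fun k hk => hk.1)
  by_contra hcon
  push_neg at hcon
  rw [Set.two_lt_ncard_iff hfin] at hcon
  obtain ⟨a, b, c, ha, hb, hc, hab, hac, hbc⟩ := hcon
  -- pairwise lemma: i < j both in S gives n(i,j) = ±1
  have pair : ∀ i j : ℕ, i ∈ S → j ∈ S → i < j →
      ∀ mi mj : ℤ, x + (i : ℝ) * α - (mi : ℝ) ∈ Set.Ico t (t + 1 / (q : ℝ)) →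
        x + (j : ℝ) * α - (mj : ℝ) ∈ Set.Ico t (t + 1 / (q : ℝ)) →
        ((j : ℤ) - i) * p - (mj - mi) * q = 1 ∨ ((j : ℤ) - i) * p - (mj - mi) * q = -1 := by
    intro i j hi hj hij mi mj hmi hmj
    have hjq : j < q := hj.1
    apply key_pm α p q hq hcop happrox ((j : ℤ) - i) (mj - mi) (by omega)
      (by exact_mod_cast (by omega : (j : ℤ) - i < q))
    have e : (((j : ℤ) - i : ℤ) : ℝ) * α - ((mj - mi : ℤ) : ℝ)
        = (x + (j : ℝ) * α - (mj : ℝ)) - (x + (i : ℝ) * α - (mi : ℝ)) := by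
      push_cast; ring
    rw [e, abs_sub_lt_iff]
    obtain ⟨h1, h2⟩ := hmi
    obtain ⟨h3, h4⟩ := hmj
    constructor <;> linarith
  have three : ∀ i j l : ℕ, i ∈ S → j ∈ S → l ∈ S → i < j → j < l → False := by
    intro i j l hi hj hl hij hjl
    obtain ⟨hiq, mi, hmi⟩ := hi
    obtain ⟨hjq, mj, hmj⟩ := hj
    obtain ⟨hlq, ml, hml⟩ := hl
    have h1 := pair i j ⟨hiq, mi, hmi⟩ ⟨hjq, mj, hmj⟩ hij mi mj hmi hmj
    have h2 := pair j l ⟨hjq, mj, hmj⟩ ⟨hlq, ml, hml⟩ hjl mj ml hmj hml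
    have h3 := pair i l ⟨hiq, mi, hmi⟩ ⟨hlq, ml, hml⟩ (hij.trans hjl) mi ml hmi hml
    have hsum : ((l : ℤ) - i) * p - (ml - mi) * q
        = (((j : ℤ) - i) * p - (mj - mi) * q) + (((l : ℤ) - j) * p - (ml - mj) * q) := by ring
    rcases h1 with h1 | h1 <;> rcases h2 with h2 | h2 <;> rcases h3 with h3 | h3 <;>
      rw [h1, h2] at hsum <;> linarith
  rcases hab.lt_or_gt with h1 | h1 <;> rcases hac.lt_or_gt with h2 | h2 <;>
    rcases hbc.lt_or_gt with h3 | h3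
  · exact three a b c ha hb hc h1 h3
  · exact three a c b ha hc hb h2 h3
  · omega
  · exact three c a b hc ha hb h2 h1
  · exact three b a c hb ha hc h1 h2
  · omega
  · exact three b c a hb hc ha h3 h2
  · exact three c b a hc hb ha h3 h1
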